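/- Let n ≥ 2, ρ ∈ (0,1), θ ∈ (0,1), and define u[S] = (n-|S|-ρ) θ^{|S|}(1-θ)^{n-|S|} for proper subsets S ⊂ [n]. If ρ·θ^n · Σ_{S ⊊ [n]} 1/u[S] < 1, then the (2^n - 1)-dimensional matrix M indexed by proper subsets of [n] with M[S,T] = ((n-|S∪T|)(1-θ)-ρ) θ^{|S∪T|} is positive definite. -/

import Mathlib

open Finset Matrix

private lemma binom_one' (m : ℕ) (θ : ℝ) :
    ∑ j ∈ Finset.range (m+1), (m.choose j : ℝ) * (θ ^ j * (1 - θ) ^ (m - j)) = 1 := by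
  have := congrArg (Polynomial.eval θ) (bernsteinPolynomial.sum (R := ℝ) m)
  simpa [bernsteinPolynomial, Polynomial.eval_finset_sum, mul_assoc] using this

private lemma binom_mean' (m : ℕ) (θ : ℝ) :
    ∑ j ∈ Finset.range (m+1), (j : ℝ) * ((m.choose j : ℝ) * (θ ^ j * (1 - θ) ^ (m - j)))
      = m * θ := by
  have := congrArg (Polynomial.eval θ) (bernsteinPolynomial.sum_smul (R := ℝ) m)
  simpa [bernsteinPolynomial, Polynomial.eval_finset_sum, mul_assoc] using this

private lemma binom_alt' (m : ℕ) (hm : m ≠ 0) :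
    ∑ j ∈ Finset.range (m+1), (m.choose j : ℝ) * (-1 : ℝ) ^ (m - j) = 0 := by
  have h := add_pow (1 : ℝ) (-1) m
  simp only [one_pow, one_mul, add_neg_cancel, zero_pow hm] at h
  rw [eq_comm] at h
  rw [← h]
  exact Finset.sum_congr rfl fun j _ => by ring

private lemma superset_sum_aux {α : Type*} [Fintype α] [DecidableEq α]
    (U : Finset α) (f : ℕ → ℝ) :
    ∑ R : Finset α, (if U ⊆ R then f R.card else 0)
      = ∑ j ∈ Finset.range (Fintype.card α - U.card + 1),
          ((Fintype.card α - U.card).choose j : ℝ) * f (U.card + j) := by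
  rw [← Finset.sum_filter]
  have h1 : ∑ R ∈ Finset.univ.filter (fun R => U ⊆ R), f R.card
      = ∑ A ∈ Uᶜ.powerset, f (U.card + A.card) := by
    refine Finset.sum_nbij' (fun R => R \ U) (fun A => U ∪ A) ?_ ?_ ?_ ?_ ?_
    · intro R hR
      simp only [Finset.mem_filter, Finset.mem_univ, true_and] at hR
      rw [Finset.mem_powerset]
      intro a ha
      simp only [Finset.mem_sdiff] at ha
      simp [ha.2]
    · intro A hA
      simp [Finset.subset_union_left]
    · intro R hR
      simp only [Finset.mem_filter, Finset.mem_univ, true_and] at hR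
      exact Finset.union_sdiff_of_subset hR
    · intro A hA
      rw [Finset.mem_powerset] at hA
      refine Finset.union_sdiff_cancel_left ?_
      rw [Finset.disjoint_left]
      intro a haU haA
      exact (Finset.mem_compl.mp (hA haA)) haU
    · intro R hR
      simp only [Finset.mem_filter, Finset.mem_univ, true_and] at hR
      show f R.card = f (U.card + (R \ U).card)
      congr 1
      have := Finset.card_sdiff_add_card_eq_card hR
      omega
  rw [h1]
  have h2 := Finset.sum_powerset_apply_card (fun k => f (U.card + k)) (x := Uᶜ)
  rw [h2, Finset.card_compl]
  exact Finset.sum_congr rfl fun j _ => by rw [nsmul_eq_mul]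

private lemma key_all (n : ℕ) (ρ θ : ℝ) (U : Finset (Fin n)) :
    ∑ R : Finset (Fin n),
      (if U ⊆ R then ((n : ℝ) - R.card - ρ) * θ ^ R.card * (1 - θ) ^ (n - R.card) else 0)
    = (((n : ℝ) - U.card) * (1 - θ) - ρ) * θ ^ U.card := by
  have hc : U.card ≤ n := by
    simpa [Finset.card_univ] using Finset.card_le_univ U
  rw [superset_sum_aux U (fun k => ((n : ℝ) - k - ρ) * θ ^ k * (1 - θ) ^ (n - k)),
    Fintype.card_fin]
  set c := U.card with hcdef
  set m := n - c with hmdef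
  have hnm : n = c + m := by omega
  have hstep : ∀ j ∈ Finset.range (m+1),
      (m.choose j : ℝ) * (((n : ℝ) - ((c + j : ℕ) : ℝ) - ρ) * θ ^ (c + j) * (1 - θ) ^ (n - (c + j)))
      = θ ^ c * ((m : ℝ) * ((m.choose j : ℝ) * (θ ^ j * (1 - θ) ^ (m - j)))
          - (j : ℝ) * ((m.choose j : ℝ) * (θ ^ j * (1 - θ) ^ (m - j)))
          - ρ * ((m.choose j : ℝ) * (θ ^ j * (1 - θ) ^ (m - j)))) := by
    intro j hj
    rw [Finset.mem_range, Nat.lt_succ_iff] at hj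
    have h1 : n - (c + j) = m - j := by omega
    have h2 : (n : ℝ) = (c : ℝ) + (m : ℝ) := by exact_mod_cast congrArg Nat.cast hnm
    rw [h1, pow_add, h2]
    push_cast
    ring
  rw [Finset.sum_congr rfl hstep, ← Finset.mul_sum]
  have e1 := binom_one' m θ
  have e2 := binom_mean' m θ
  have e3 : ∑ j ∈ Finset.range (m+1),
      ((m : ℝ) * ((m.choose j : ℝ) * (θ ^ j * (1 - θ) ^ (m - j)))
        - (j : ℝ) * ((m.choose j : ℝ) * (θ ^ j * (1 - θ) ^ (m - j)))
        - ρ * ((m.choose j : ℝ) * (θ ^ j * (1 - θ) ^ (m - j))))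
      = (m : ℝ) - (m : ℝ) * θ - ρ := by
    rw [Finset.sum_sub_distrib, Finset.sum_sub_distrib, ← Finset.mul_sum, ← Finset.mul_sum,
      e1, e2]
    ring
  rw [e3]
  have hmr : (m : ℝ) = (n : ℝ) - (c : ℝ) := by
    rw [hmdef]
    push_cast [Nat.cast_sub hc]
    ring
  rw [hmr]
  ring

private lemma key_sign (n : ℕ) (U : Finset (Fin n)) (hU : U ≠ Finset.univ) :
    ∑ R : Finset (Fin n), (if U ⊆ R then (-1 : ℝ) ^ (n - R.card) else 0) = 0 := by
  rw [superset_sum_aux U (fun k => (-1 : ℝ) ^ (n - k)), Fintype.card_fin]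
  have hc : U.card < n := by
    have h1 := Finset.card_lt_card (Finset.ssubset_univ_iff.mpr hU)
    simpa [Finset.card_univ] using h1
  set c := U.card with hcdef
  set m := n - c with hmdef
  have hm : m ≠ 0 := by omega
  have hstep : ∀ j ∈ Finset.range (m+1),
      (m.choose j : ℝ) * (-1 : ℝ) ^ (n - (c + j))
        = (m.choose j : ℝ) * (-1 : ℝ) ^ (m - j) := by
    intro j hj
    rw [Finset.mem_range, Nat.lt_succ_iff] at hj
    congr 2
    omega
  rw [Finset.sum_congr rfl hstep]
  exact binom_alt' m hm

/-- If `ρ θ^n Σ_{S ⊊ [n]} 1/u[S] < 1` then the moment matrix restricted to proper subsets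
is positive definite. -/
theorem moment_matrix_proper_posDef (n : ℕ) (hn : 2 ≤ n) (ρ θ : ℝ)
    (hρ0 : 0 < ρ) (hρ1 : ρ < 1) (hθ0 : 0 < θ) (hθ1 : θ < 1)
    (u : Finset (Fin n) → ℝ)
    (hu : ∀ S : Finset (Fin n),
      u S = (n - S.card - ρ) * θ ^ S.card * (1 - θ) ^ (n - S.card))
    (hsum : ρ * θ ^ n *
      ∑ S ∈ Finset.univ.filter (fun S : Finset (Fin n) => S ≠ Finset.univ), (u S)⁻¹ < 1)
    (M : Matrix {S : Finset (Fin n) // S ≠ Finset.univ}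
                {S : Finset (Fin n) // S ≠ Finset.univ} ℝ)
    (hM : ∀ S T : {S : Finset (Fin n) // S ≠ Finset.univ},
      M S T = ((n - (S.1 ∪ T.1).card) * (1 - θ) - ρ) * θ ^ (S.1 ∪ T.1).card) :
    M.PosDef := by
  classical
  -- basic facts
  have huuniv : u Finset.univ = -(ρ * θ ^ n) := by
    rw [hu]
    simp only [Finset.card_univ, Fintype.card_fin, Nat.sub_self, pow_zero, mul_one, sub_self]
    ring
  have hupos : ∀ R : {S : Finset (Fin n) // S ≠ Finset.univ}, 0 < u R.1 := by
    intro R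
    rw [hu]
    have hcard : R.1.card < n := by
      have h1 := Finset.card_lt_card (Finset.ssubset_univ_iff.mpr R.2)
      simpa [Finset.card_univ] using h1
    have h1 : (R.1.card : ℝ) + 1 ≤ (n : ℝ) := by exact_mod_cast hcard
    have h2 : 0 < (n : ℝ) - R.1.card - ρ := by linarith
    exact mul_pos (mul_pos h2 (pow_pos hθ0 _)) (pow_pos (by linarith) _)
  -- sum over proper subsets of `if U ⊆ R then u R` equals `w U + ρ θ^n`
  have key : ∀ U : Finset (Fin n),
      ∑ R : {S : Finset (Fin n) // S ≠ Finset.univ}, (if U ⊆ R.1 then u R.1 else 0)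
        = (((n : ℝ) - U.card) * (1 - θ) - ρ) * θ ^ U.card + ρ * θ ^ n := by
    intro U
    have hsub : ∑ R : {S : Finset (Fin n) // S ≠ Finset.univ}, (if U ⊆ R.1 then u R.1 else 0)
        = ∑ R ∈ (Finset.univ : Finset (Finset (Fin n))).erase Finset.univ,
            (if U ⊆ R then u R else 0) := by
      rw [← Finset.filter_ne']
      exact (Finset.sum_subtype (p := fun S : Finset (Fin n) => S ≠ Finset.univ)
        (Finset.univ.filter (fun S : Finset (Fin n) => S ≠ Finset.univ))
        (fun y => by simp) (fun R => if U ⊆ R then u R else 0)).symm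
    rw [hsub, Finset.sum_erase_eq_sub (Finset.mem_univ _)]
    have hall : ∑ R : Finset (Fin n), (if U ⊆ R then u R else 0)
        = (((n : ℝ) - U.card) * (1 - θ) - ρ) * θ ^ U.card := by
      rw [← key_all n ρ θ U]
      exact Finset.sum_congr rfl fun R _ => by rw [hu]
    rw [hall, if_pos (Finset.subset_univ U), huuniv]
    ring
  -- sign sums
  have hsign : ∀ S : {S : Finset (Fin n) // S ≠ Finset.univ},
      ∑ R : {S : Finset (Fin n) // S ≠ Finset.univ},
        (if S.1 ⊆ R.1 then (-1 : ℝ) ^ (n - R.1.card + 1) else 0) = 1 := by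
    intro S
    have hsub : ∑ R : {S : Finset (Fin n) // S ≠ Finset.univ},
        (if S.1 ⊆ R.1 then (-1 : ℝ) ^ (n - R.1.card + 1) else 0)
        = ∑ R ∈ (Finset.univ : Finset (Finset (Fin n))).erase Finset.univ,
            (if S.1 ⊆ R then (-1 : ℝ) ^ (n - R.card + 1) else 0) := by
      rw [← Finset.filter_ne']
      exact (Finset.sum_subtype (p := fun S : Finset (Fin n) => S ≠ Finset.univ)
        (Finset.univ.filter (fun S : Finset (Fin n) => S ≠ Finset.univ))
        (fun y => by simp) (fun R => if S.1 ⊆ R then (-1 : ℝ) ^ (n - R.card + 1) else 0)).symm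
    rw [hsub, Finset.sum_erase_eq_sub (Finset.mem_univ _)]
    have hall : ∑ R : Finset (Fin n), (if S.1 ⊆ R then (-1 : ℝ) ^ (n - R.card + 1) else 0)
        = 0 := by
      have h := key_sign n S.1 S.2
      have hstep : ∀ R : Finset (Fin n),
          (if S.1 ⊆ R then (-1 : ℝ) ^ (n - R.card + 1) else 0)
            = (-1) * (if S.1 ⊆ R then (-1 : ℝ) ^ (n - R.card) else 0) := by
        intro R
        split_ifs with h1
        · rw [pow_succ]; ring
        · ring
      rw [Finset.sum_congr rfl fun R _ => hstep R, ← Finset.mul_sum, h]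
      ring
    rw [hall, if_pos (Finset.subset_univ _)]
    simp [Finset.card_univ, Fintype.card_fin]
  refine Matrix.posDef_iff_dotProduct_mulVec.mpr ⟨?_, ?_⟩
  · -- Hermitian
    ext S T
    simp only [Matrix.conjTranspose_apply, hM, star_trivial]
    rw [Finset.union_comm]
  · intro x hx
    have hstar : star x = x := funext fun _ => rfl
    rw [hstar]
    set a : {S : Finset (Fin n) // S ≠ Finset.univ} → ℝ :=
      fun R => ∑ S : {S : Finset (Fin n) // S ≠ Finset.univ},
        (if S.1 ⊆ R.1 then x S else 0) with ha
    have hMST : ∀ S T : {S : Finset (Fin n) // S ≠ Finset.univ},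
        M S T = (∑ R : {S : Finset (Fin n) // S ≠ Finset.univ},
          (if S.1 ∪ T.1 ⊆ R.1 then u R.1 else 0)) - ρ * θ ^ n := by
      intro S T
      rw [hM, key (S.1 ∪ T.1)]
      ring
    -- quadratic form identity
    have hQ : x ⬝ᵥ M.mulVec x
        = (∑ R : {S : Finset (Fin n) // S ≠ Finset.univ}, u R.1 * (a R * a R))
          - ρ * θ ^ n * ((∑ S : {S : Finset (Fin n) // S ≠ Finset.univ}, x S)
            * (∑ S : {S : Finset (Fin n) // S ≠ Finset.univ}, x S)) := by
      have step1 : x ⬝ᵥ M.mulVec x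
          = ∑ S : {S : Finset (Fin n) // S ≠ Finset.univ},
              ∑ T : {S : Finset (Fin n) // S ≠ Finset.univ}, x S * (M S T * x T) := by
        simp [dotProduct, Matrix.mulVec, Finset.mul_sum]
      have step2 : ∀ S T : {S : Finset (Fin n) // S ≠ Finset.univ},
          x S * (M S T * x T)
          = (∑ R : {S : Finset (Fin n) // S ≠ Finset.univ},
              u R.1 * ((if S.1 ⊆ R.1 then x S else 0) * (if T.1 ⊆ R.1 then x T else 0)))
            - ρ * θ ^ n * (x S * x T) := by
        intro S T
        have hterm : ∀ R : {S : Finset (Fin n) // S ≠ Finset.univ},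
            (if S.1 ∪ T.1 ⊆ R.1 then u R.1 else 0) * (x S * x T)
            = u R.1 * ((if S.1 ⊆ R.1 then x S else 0) * (if T.1 ⊆ R.1 then x T else 0)) := by
          intro R
          by_cases h1 : S.1 ⊆ R.1 <;> by_cases h2 : T.1 ⊆ R.1 <;>
            simp [Finset.union_subset_iff, h1, h2] <;> ring
        calc x S * (M S T * x T)
            = (∑ R : {S : Finset (Fin n) // S ≠ Finset.univ},
                (if S.1 ∪ T.1 ⊆ R.1 then u R.1 else 0)) * (x S * x T)
              - ρ * θ ^ n * (x S * x T) := by rw [hMST]; ring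
          _ = _ := by
              rw [Finset.sum_mul]
              exact congrArg (· - ρ * θ ^ n * (x S * x T))
                (Finset.sum_congr rfl fun R _ => hterm R)
      have step3 : ∑ S : {S : Finset (Fin n) // S ≠ Finset.univ},
          ∑ T : {S : Finset (Fin n) // S ≠ Finset.univ},
            (∑ R : {S : Finset (Fin n) // S ≠ Finset.univ},
              u R.1 * ((if S.1 ⊆ R.1 then x S else 0) * (if T.1 ⊆ R.1 then x T else 0)))
          = ∑ R : {S : Finset (Fin n) // S ≠ Finset.univ}, u R.1 * (a R * a R) := by
        rw [Finset.sum_congr rfl (fun S (_ : S ∈ Finset.univ) => Finset.sum_comm), Finset.sum_comm]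
        refine Finset.sum_congr rfl fun R _ => ?_
        have : a R * a R = ∑ S : {S : Finset (Fin n) // S ≠ Finset.univ},
            ∑ T : {S : Finset (Fin n) // S ≠ Finset.univ},
              ((if S.1 ⊆ R.1 then x S else 0) * (if T.1 ⊆ R.1 then x T else 0)) := by
          rw [ha]
          exact Finset.sum_mul_sum _ _ _ _
        rw [this, Finset.mul_sum]
        exact Finset.sum_congr rfl fun S _ => by rw [Finset.mul_sum]
      have step4 : ∑ S : {S : Finset (Fin n) // S ≠ Finset.univ},
          ∑ T : {S : Finset (Fin n) // S ≠ Finset.univ}, ρ * θ ^ n * (x S * x T)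
          = ρ * θ ^ n * ((∑ S : {S : Finset (Fin n) // S ≠ Finset.univ}, x S)
            * (∑ S : {S : Finset (Fin n) // S ≠ Finset.univ}, x S)) := by
        rw [Finset.sum_mul_sum, Finset.mul_sum]
        exact Finset.sum_congr rfl fun S _ => by rw [Finset.mul_sum]
      rw [step1, Finset.sum_congr rfl fun S (_ : S ∈ Finset.univ) =>
        Finset.sum_congr rfl fun T (_ : T ∈ Finset.univ) => step2 S T]
      rw [Finset.sum_congr rfl fun S (_ : S ∈ Finset.univ) => Finset.sum_sub_distrib _ _,
        Finset.sum_sub_distrib, step3, step4]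
    -- the total sum of x in terms of a
    have ht : ∑ S : {S : Finset (Fin n) // S ≠ Finset.univ}, x S
        = ∑ R : {S : Finset (Fin n) // S ≠ Finset.univ},
            (-1 : ℝ) ^ (n - R.1.card + 1) * a R := by
      have h1 : ∑ R : {S : Finset (Fin n) // S ≠ Finset.univ},
          (-1 : ℝ) ^ (n - R.1.card + 1) * a R
          = ∑ R : {S : Finset (Fin n) // S ≠ Finset.univ},
              ∑ S : {S : Finset (Fin n) // S ≠ Finset.univ},
                (if S.1 ⊆ R.1 then (-1 : ℝ) ^ (n - R.1.card + 1) else 0) * x S := by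
        refine Finset.sum_congr rfl fun R _ => ?_
        rw [ha, Finset.mul_sum]
        refine Finset.sum_congr rfl fun S _ => ?_
        split_ifs <;> ring
      rw [h1, Finset.sum_comm]
      refine (Finset.sum_congr rfl fun S _ => ?_).symm
      rw [← Finset.sum_mul, hsign S, one_mul]
    -- Cauchy-Schwarz
    have hcs : (∑ S : {S : Finset (Fin n) // S ≠ Finset.univ}, x S) ^ 2
        ≤ (∑ R : {S : Finset (Fin n) // S ≠ Finset.univ}, (u R.1)⁻¹)
          * (∑ R : {S : Finset (Fin n) // S ≠ Finset.univ}, u R.1 * (a R * a R)) := by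
      rw [ht]
      have h := Finset.sum_mul_sq_le_sq_mul_sq Finset.univ
        (fun R : {S : Finset (Fin n) // S ≠ Finset.univ} =>
          (-1 : ℝ) ^ (n - R.1.card + 1) / Real.sqrt (u R.1))
        (fun R : {S : Finset (Fin n) // S ≠ Finset.univ} => Real.sqrt (u R.1) * a R)
      have e1 : ∀ R : {S : Finset (Fin n) // S ≠ Finset.univ},
          ((-1 : ℝ) ^ (n - R.1.card + 1) / Real.sqrt (u R.1)) * (Real.sqrt (u R.1) * a R)
          = (-1 : ℝ) ^ (n - R.1.card + 1) * a R := by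
        intro R
        have hs : Real.sqrt (u R.1) ≠ 0 := ne_of_gt (Real.sqrt_pos.mpr (hupos R))
        field_simp
      have e2 : ∀ R : {S : Finset (Fin n) // S ≠ Finset.univ},
          ((-1 : ℝ) ^ (n - R.1.card + 1) / Real.sqrt (u R.1)) ^ 2 = (u R.1)⁻¹ := by
        intro R
        have h1 : ((-1 : ℝ) ^ (n - R.1.card + 1)) ^ 2 = 1 := by
          rw [← pow_mul, mul_comm, pow_mul]
          norm_num
        rw [div_pow, h1, Real.sq_sqrt (le_of_lt (hupos R)), one_div]
      have e3 : ∀ R : {S : Finset (Fin n) // S ≠ Finset.univ},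
          (Real.sqrt (u R.1) * a R) ^ 2 = u R.1 * (a R * a R) := by
        intro R
        rw [mul_pow, Real.sq_sqrt (le_of_lt (hupos R))]
        ring
      calc (∑ R : {S : Finset (Fin n) // S ≠ Finset.univ},
              (-1 : ℝ) ^ (n - R.1.card + 1) * a R) ^ 2
          = (∑ R : {S : Finset (Fin n) // S ≠ Finset.univ},
              ((-1 : ℝ) ^ (n - R.1.card + 1) / Real.sqrt (u R.1))
                * (Real.sqrt (u R.1) * a R)) ^ 2 := by
            rw [Finset.sum_congr rfl fun R _ => (e1 R)]
        _ ≤ (∑ R : {S : Finset (Fin n) // S ≠ Finset.univ},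
              ((-1 : ℝ) ^ (n - R.1.card + 1) / Real.sqrt (u R.1)) ^ 2)
            * (∑ R : {S : Finset (Fin n) // S ≠ Finset.univ},
              (Real.sqrt (u R.1) * a R) ^ 2) := h
        _ = _ := by
            rw [Finset.sum_congr rfl fun R _ => (e2 R),
              Finset.sum_congr rfl fun R _ => (e3 R)]
    -- positivity of the main quadratic sum
    have hex : ∃ S : {S : Finset (Fin n) // S ≠ Finset.univ}, x S ≠ 0 := by
      by_contra hc
      push_neg at hc
      exact hx (funext fun S => hc S)
    obtain ⟨S', hS'⟩ := hex
    obtain ⟨S₀, hS₀mem, hS₀min⟩ := Finset.exists_min_image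
      (Finset.univ.filter fun S : {S : Finset (Fin n) // S ≠ Finset.univ} => x S ≠ 0)
      (fun S => S.1.card) ⟨S', by simp [hS']⟩
    rw [Finset.mem_filter] at hS₀mem
    have ha0 : a S₀ = x S₀ := by
      show (∑ S : {S : Finset (Fin n) // S ≠ Finset.univ},
        (if S.1 ⊆ S₀.1 then x S else 0)) = x S₀
      have hterm : ∀ S : {S : Finset (Fin n) // S ≠ Finset.univ},
          (if S.1 ⊆ S₀.1 then x S else 0) = (if S = S₀ then x S₀ else 0) := by
        intro S
        by_cases hS : S = S₀
        · subst hS; simp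
        · rw [if_neg hS]
          by_cases hsub : S.1 ⊆ S₀.1
          · rw [if_pos hsub]
            by_contra hxS
            have hmem : S ∈ Finset.univ.filter
                (fun S : {S : Finset (Fin n) // S ≠ Finset.univ} => x S ≠ 0) := by
              simp [hxS]
            have hle := hS₀min S hmem
            have heq : S.1 = S₀.1 := Finset.eq_of_subset_of_card_le hsub hle
            exact hS (Subtype.ext heq)
          · rw [if_neg hsub]
      rw [Finset.sum_congr rfl fun S _ => hterm S, Finset.sum_ite_eq' Finset.univ S₀]
      simp
    have hQpos : 0 < ∑ R : {S : Finset (Fin n) // S ≠ Finset.univ}, u R.1 * (a R * a R) := by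
      have hnn : ∀ R ∈ (Finset.univ : Finset {S : Finset (Fin n) // S ≠ Finset.univ}),
          (0 : ℝ) ≤ u R.1 * (a R * a R) :=
        fun R _ => mul_nonneg (le_of_lt (hupos R)) (mul_self_nonneg _)
      have hterm : 0 < u S₀.1 * (a S₀ * a S₀) := by
        refine mul_pos (hupos S₀) ?_
        rw [ha0]
        exact mul_self_pos.mpr hS₀mem.2
      exact lt_of_lt_of_le hterm (Finset.single_le_sum hnn (Finset.mem_univ S₀))
    -- convert hsum to subtype sum
    have hsum' : ρ * θ ^ n * ∑ R : {S : Finset (Fin n) // S ≠ Finset.univ}, (u R.1)⁻¹ < 1 := by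
      have : ∑ S ∈ Finset.univ.filter (fun S : Finset (Fin n) => S ≠ Finset.univ), (u S)⁻¹
          = ∑ R : {S : Finset (Fin n) // S ≠ Finset.univ}, (u R.1)⁻¹ :=
        Finset.sum_subtype _ (fun x => by simp) _
      rw [← this]
      exact hsum
    -- conclude
    rw [hQ]
    have hρθ : 0 < ρ * θ ^ n := mul_pos hρ0 (pow_pos hθ0 n)
    nlinarith [mul_le_mul_of_nonneg_left hcs (le_of_lt hρθ),
      mul_lt_mul_of_pos_right hsum' hQpos, hQpos, hρθ]
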